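/- arXiv:1708.02466 — 2 statements merged into one kernel-verified Lean document; each statement's English description precedes it below -/
import Mathlib

section
/- For every real number a with 0 < a ≤ (−3 + √13)/2, the (a,a)-Mahler measure of S(x,y) = y² + 2xy − x³ + x equals log a; that is, (1/(2π)²)·∫₀^{2π}∫₀^{2π} log|S(a·e^{iθ}, a·e^{iφ})| dθ dφ = log a. -/
/-- The `(a,b)`-Mahler measure of a two-variable polynomial function `P`,
given by `(1/(2π)²)·∫₀^{2π}∫₀^{2π} log|P(a·e^{iθ}, b·e^{iφ})| dθ dφ`. -/
noncomputable def mahlerMeasure (P : ℂ → ℂ → ℂ) (a b : ℝ) : ℝ :=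
  (1 / (2 * Real.pi) ^ 2) *
    ∫ θ in (0:ℝ)..(2 * Real.pi), ∫ φ in (0:ℝ)..(2 * Real.pi),
      Real.log (‖P ((a : ℂ) * Complex.exp (θ * Complex.I))
        ((b : ℂ) * Complex.exp (φ * Complex.I))‖)

/-- `S(x,y) = y² + 2xy − x³ + x`. -/
noncomputable def S : ℂ → ℂ → ℂ := fun x y => y ^ 2 + 2 * x * y - x ^ 3 + x

open Complex Metric intervalIntegral


lemma meanvalue_log_abs (g : ℂ → ℂ) (hg : Differentiable ℂ g)
    (hpos : ∀ z ∈ closedBall (0:ℂ) 1, 0 < (g z).re) :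
    ∫ θ in (0:ℝ)..(2*Real.pi), Real.log (‖g (Complex.exp (θ * I))‖) =
      2 * Real.pi * Real.log (‖g 0‖) := by
  set f : ℂ → ℂ := fun z => Complex.log (g z) with hf
  have hslit : ∀ z ∈ closedBall (0:ℂ) 1, g z ∈ slitPlane := fun z hz =>
    mem_slitPlane_iff.2 (Or.inl (hpos z hz))
  have hcont : ContinuousOn f (closedBall (0:ℂ) 1) := fun z hz =>
    ((hg.continuous.continuousAt).clog (hslit z hz)).continuousWithinAt
  have hdiff : ∀ z ∈ ball (0:ℂ) 1 \ (∅ : Set ℂ), DifferentiableAt ℂ f z := fun z hz =>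
    (hg z).clog (hslit z (ball_subset_closedBall hz.1))
  have key := circleIntegral_sub_center_inv_smul_of_differentiable_on_off_countable
    one_pos Set.countable_empty hcont hdiff
  have hunfold : (∮ z in C(0,1), (z - 0)⁻¹ • f z)
      = I * ∫ θ in (0:ℝ)..(2*Real.pi), f (Complex.exp (θ * I)) := by
    rw [circleIntegral, ← intervalIntegral.integral_const_mul]
    refine intervalIntegral.integral_congr fun θ _ => ?_
    have he : circleMap 0 1 θ = Complex.exp (θ * I) := by simp [circleMap]
    rw [deriv_circleMap, he, smul_eq_mul, smul_eq_mul, sub_zero]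
    have : Complex.exp (θ * I) ≠ 0 := Complex.exp_ne_zero _
    field_simp
  rw [hunfold, smul_eq_mul] at key
  have hI : (2 * (Real.pi:ℂ) * I) * f 0 = I * ((2*(Real.pi:ℂ)) * f 0) := by ring
  rw [hI] at key
  have key2 : (∫ θ in (0:ℝ)..(2*Real.pi), f (Complex.exp (θ * I))) = (2*(Real.pi:ℂ)) * f 0 :=
    mul_left_cancel₀ Complex.I_ne_zero key
  have hcf : Continuous fun θ : ℝ => f (Complex.exp (θ * I)) := by
    rw [continuous_iff_continuousAt]
    intro θ
    have hmem : Complex.exp ((θ:ℂ) * I) ∈ closedBall (0:ℂ) 1 := by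
      simp [Complex.norm_exp]
    exact ContinuousAt.clog
      ((hg.continuous.comp (Complex.continuous_exp.comp
        (Complex.continuous_ofReal.mul continuous_const))).continuousAt) (hslit _ hmem)
  have hre := Complex.reCLM.intervalIntegral_comp_comm (μ := MeasureTheory.volume)
    (hcf.intervalIntegrable (0:ℝ) (2*Real.pi))
  rw [key2] at hre
  have : ∫ θ in (0:ℝ)..(2*Real.pi), Real.log (‖g (Complex.exp (θ * I))‖)
      = ∫ θ in (0:ℝ)..(2*Real.pi), Complex.reCLM (f (Complex.exp (θ * I))) := by
    refine intervalIntegral.integral_congr fun θ _ => ?_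
    simp [hf, Complex.log_re]
  rw [this, hre]
  simp [hf, Complex.log_re, Complex.mul_re]


-- equality case of triangle inequality, concrete version
lemma eq_case {z : ℂ} {r : ℝ} (hz : ‖z‖ = r) (h : ‖1 - z‖ = 1 - r) :
    z = (r : ℂ) := by
  have h1 : Complex.normSq (1 - z) = (1 - r)^2 := by rw [← Complex.sq_norm, h]
  have h2 : Complex.normSq z = r^2 := by rw [← Complex.sq_norm, hz]
  have e1 : (1 - z.re)^2 + z.im^2 = (1-r)^2 := by
    simpa [Complex.normSq_apply, sub_re, sub_im, one_re, one_im, sq] using h1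
  have e2 : z.re^2 + z.im^2 = r^2 := by
    simpa [Complex.normSq_apply, sq] using h2
  have hre : z.re = r := by nlinarith
  have him : z.im = 0 := by nlinarith
  exact Complex.ext (by simp [hre]) (by simp [him])

lemma root_big {a : ℝ} (ha0 : 0 < a) (ha1 : a^2 + 3*a ≤ 1) {x y : ℂ}
    (hx : ‖x‖ = a) (hx2 : x^2 ≠ ((a:ℂ))^2)
    (hy : y^2 + 2*x*y - x^3 + x = 0) : a < ‖y‖ := by
  by_contra hle
  push_neg at hle
  have hynn : (0:ℝ) ≤ ‖y‖ := (norm_nonneg y)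
  have key : x * (1 - x^2) = -(y*(y+2*x)) := by linear_combination hy
  have habs : a * ‖1 - x^2‖ = ‖y‖ * ‖y + 2*x‖ := by
    have := congrArg (‖·‖) key
    rwa [norm_mul, norm_neg, norm_mul, hx] at this
  have h2 : ‖y + 2*x‖ ≤ 3*a := by
    calc ‖y + 2*x‖ ≤ ‖y‖ + ‖2*x‖ := norm_add_le _ _
    _ ≤ a + 2*a := by rw [norm_mul, hx]; simp; linarith
    _ = 3*a := by ring
  have h3 : 1 - a^2 ≤ ‖1 - x^2‖ := by
    have := norm_add_le (1 - x^2) (x^2)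
    simp only [sub_add_cancel] at this
    rw [norm_one] at this
    rw [norm_pow, hx] at this
    linarith
  have h4 : ‖1 - x^2‖ = 1 - a^2 := by
    have hle2 : a * ‖1 - x^2‖ ≤ a * (1 - a^2) := by
      calc a * ‖1 - x^2‖ = ‖y‖ * ‖y + 2*x‖ := habs
      _ ≤ a * (3*a) := by nlinarith [norm_nonneg (y + 2*x)]
      _ ≤ a * (1 - a^2) := by nlinarith
    have := (mul_le_mul_iff_right₀ ha0).1 hle2
    linarith
  have hxx : x^2 = ((a^2 : ℝ) : ℂ) := by
    apply eq_case (r := a^2) (by rw [norm_pow, hx]) (by rw [h4])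
  exact hx2 (by push_cast at hxx; exact hxx)





lemma one_sub_ne {c : ℂ} (hc : ‖c‖ < 1) (φ : ℝ) :
    ‖1 - c * Complex.exp (φ * I)‖ ≠ 0 := by
  intro h
  have h1 : (1 : ℂ) - c * Complex.exp (φ * I) = 0 := norm_eq_zero.1 h
  have h2 : ‖c * Complex.exp (φ * I)‖ = 1 := by
    have : c * Complex.exp (φ * I) = 1 := by linear_combination -h1
    rw [this]; simp
  rw [norm_mul, Complex.norm_exp] at h2
  simp only [Complex.mul_re, Complex.ofReal_re, Complex.I_re, mul_zero, Complex.ofReal_im,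
    Complex.I_im, mul_one, sub_self, zero_sub, Real.exp_zero] at h2
  rw [h2] at hc
  exact lt_irrefl _ hc

lemma jensen_zero {c : ℂ} (hc : ‖c‖ < 1) :
    ∫ φ in (0:ℝ)..(2*Real.pi), Real.log (‖1 - c * Complex.exp (φ * I)‖) = 0 := by
  have h := meanvalue_log_abs (fun z => 1 - c * z)
    (by fun_prop)
    (fun z hz => by
      have hz1 : ‖z‖ ≤ 1 := by simpa [Complex.dist_eq] using hz
      have h1 : ‖c*z‖ < 1 := by
        rw [norm_mul]
        nlinarith [norm_nonneg c, norm_nonneg z]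
      have h2 : (c*z).re ≤ ‖c*z‖ := Complex.re_le_norm _
      simp only [sub_re, one_re]
      linarith)
  simpa using h

lemma cont_logabs (c : ℂ) (hc : ‖c‖ < 1) :
    Continuous (fun φ : ℝ => Real.log (‖1 - c * Complex.exp (φ * I)‖)) := by
  apply Continuous.log
  · exact continuous_norm.comp (continuous_const.sub (continuous_const.mul
      (Complex.continuous_exp.comp (Complex.continuous_ofReal.mul continuous_const))))
  · exact fun φ => one_sub_ne hc φ

lemma inner_integral {a : ℝ} (ha0 : 0 < a) (ha1 : a^2 + 3*a ≤ 1) {x : ℂ}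
    (hx : ‖x‖ = a) (hx2 : x^2 ≠ ((a:ℂ))^2) :
    (∫ φ in (0:ℝ)..(2*Real.pi),
        Real.log (‖S x ((a:ℂ) * Complex.exp (φ * I))‖))
      = 2*Real.pi * Real.log (‖x - x^3‖) := by
  obtain ⟨s, hs⟩ := IsAlgClosed.exists_pow_nat_eq (x^3 + x^2 - x) (n := 2) (by norm_num)
  set α : ℂ := -x + s with hαdef
  set β : ℂ := -x - s with hβdef
  have hαβ : α * β = x - x^3 := by rw [hαdef, hβdef]; linear_combination -hs
  have hα : a < ‖α‖ := by
    refine root_big ha0 ha1 hx hx2 ?_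
    rw [hαdef]; linear_combination hs
  have hβ : a < ‖β‖ := by
    refine root_big ha0 ha1 hx hx2 ?_
    rw [hβdef]; linear_combination hs
  have hα0 : α ≠ 0 := by intro h; rw [h] at hα; simp at hα; linarith
  have hβ0 : β ≠ 0 := by intro h; rw [h] at hβ; simp at hβ; linarith
  have hxx0 : ‖x - x^3‖ ≠ 0 :=
    norm_ne_zero_iff.2 (by rw [← hαβ]; exact mul_ne_zero hα0 hβ0)
  set c₁ : ℂ := (a:ℂ)/α with hc₁def
  set c₂ : ℂ := (a:ℂ)/β with hc₂def
  have hc₁ : ‖c₁‖ < 1 := by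
    rw [hc₁def, norm_div, Complex.norm_real, Real.norm_eq_abs, abs_of_pos ha0, div_lt_one (by linarith)]
    exact hα
  have hc₂ : ‖c₂‖ < 1 := by
    rw [hc₂def, norm_div, Complex.norm_real, Real.norm_eq_abs, abs_of_pos ha0, div_lt_one (by linarith)]
    exact hβ
  have hpt : ∀ φ : ℝ, Real.log (‖S x ((a:ℂ) * Complex.exp (φ * I))‖)
      = Real.log (‖x - x^3‖)
        + (Real.log (‖1 - c₁ * Complex.exp (φ * I)‖)
          + Real.log (‖1 - c₂ * Complex.exp (φ * I)‖)) := by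
    intro φ
    have e1 : (a:ℂ) * Complex.exp (φ * I) - α = -α * (1 - c₁ * Complex.exp (φ * I)) := by
      rw [hc₁def]; field_simp; ring
    have e2 : (a:ℂ) * Complex.exp (φ * I) - β = -β * (1 - c₂ * Complex.exp (φ * I)) := by
      rw [hc₂def]; field_simp; ring
    have hfac : S x ((a:ℂ) * Complex.exp (φ * I))
        = ((a:ℂ) * Complex.exp (φ * I) - α) * ((a:ℂ) * Complex.exp (φ * I) - β) := by
      simp only [S, hαdef, hβdef]; linear_combination hs
    have hz : S x ((a:ℂ) * Complex.exp (φ * I))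
        = (x - x^3) * ((1 - c₁ * Complex.exp (φ * I)) * (1 - c₂ * Complex.exp (φ * I))) := by
      rw [hfac, e1, e2, ← hαβ]; ring
    rw [hz, norm_mul, norm_mul,
      Real.log_mul hxx0 (mul_ne_zero (one_sub_ne hc₁ φ) (one_sub_ne hc₂ φ)),
      Real.log_mul (one_sub_ne hc₁ φ) (one_sub_ne hc₂ φ)]
  rw [intervalIntegral.integral_congr (fun φ _ => hpt φ)]
  have int1 : IntervalIntegrable (fun _ : ℝ => Real.log (‖x - x^3‖))
      MeasureTheory.volume 0 (2*Real.pi) := intervalIntegrable_const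
  have int2 : IntervalIntegrable
      (fun φ : ℝ => Real.log (‖1 - c₁ * Complex.exp (φ * I)‖))
      MeasureTheory.volume 0 (2*Real.pi) := (cont_logabs c₁ hc₁).intervalIntegrable _ _
  have int3 : IntervalIntegrable
      (fun φ : ℝ => Real.log (‖1 - c₂ * Complex.exp (φ * I)‖))
      MeasureTheory.volume 0 (2*Real.pi) := (cont_logabs c₂ hc₂).intervalIntegrable _ _
  rw [intervalIntegral.integral_add int1 (int2.add int3),
    intervalIntegral.integral_add int2 int3, jensen_zero hc₁, jensen_zero hc₂,
    intervalIntegral.integral_const]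
  simp





lemma one_sub_sq_ne {a : ℝ} (ha0 : 0 < a) (ha' : a < 1) (θ : ℝ) :
    ‖1 - ((a:ℂ))^2 * Complex.exp ((θ:ℂ) * I)^2‖ ≠ 0 := by
  intro h
  have h1 : (1:ℂ) - ((a:ℂ))^2 * Complex.exp ((θ:ℂ) * I)^2 = 0 := norm_eq_zero.1 h
  have h3 : ((a:ℂ))^2 * Complex.exp ((θ:ℂ) * I)^2 = 1 := by linear_combination -h1
  have h2 : ‖((a:ℂ))^2 * Complex.exp ((θ:ℂ) * I)^2‖ = 1 := by rw [h3]; simp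
  rw [norm_mul, norm_pow, norm_pow, Complex.norm_real, Real.norm_eq_abs, abs_of_pos ha0,
    Complex.norm_exp_ofReal_mul_I] at h2
  nlinarith

theorem stmt_1 (a : ℝ) (ha0 : 0 < a) (ha : a ≤ (-3 + Real.sqrt 13) / 2) :
    mahlerMeasure S a a = Real.log a := by
  have hs13 : Real.sqrt 13 ^ 2 = 13 := Real.sq_sqrt (by norm_num)
  have ha1 : a^2 + 3*a ≤ 1 := by nlinarith [Real.sqrt_nonneg 13]
  have ha' : a < 1 := by nlinarith
  have hπ := Real.pi_pos
  have ha0' : (a:ℂ) ≠ 0 := Complex.ofReal_ne_zero.2 (ne_of_gt ha0)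
  -- null bad set
  have hnull : MeasureTheory.volume {θ : ℝ | Complex.exp ((θ:ℂ) * I)^2 = 1} = 0 := by
    have hsub : {θ : ℝ | Complex.exp ((θ:ℂ) * I)^2 = 1} ⊆
        Set.range (fun n : ℤ => (n : ℝ) * Real.pi) := by
      intro θ hθ
      have hθ' : Complex.exp ((θ:ℂ) * I) ^ 2 = 1 := hθ
      have h1 : Complex.exp (2 * ((θ:ℂ) * I)) = 1 := by
        rw [show (2:ℂ) * ((θ:ℂ) * I) = (θ:ℂ)*I + (θ:ℂ)*I by ring, Complex.exp_add, ← pow_two]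
        exact hθ'
      obtain ⟨n, hn⟩ := Complex.exp_eq_one_iff.1 h1
      refine ⟨n, ?_⟩
      have h2 := congrArg Complex.im hn
      simp at h2
      show (n:ℝ) * Real.pi = θ
      linarith
    exact MeasureTheory.measure_mono_null hsub ((Set.countable_range fun n : ℤ => (n:ℝ) * Real.pi).measure_zero MeasureTheory.volume)
  have hae : ∀ᵐ θ : ℝ, θ ∉ {θ : ℝ | Complex.exp ((θ:ℂ) * I)^2 = 1} :=
    (MeasureTheory.measure_eq_zero_iff_ae_notMem).1 hnull
  have hcong : (∫ θ in (0:ℝ)..(2*Real.pi), ∫ φ in (0:ℝ)..(2*Real.pi),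
        Real.log (‖S ((a:ℂ) * Complex.exp (θ * I)) ((a:ℂ) * Complex.exp (φ * I))‖))
      = ∫ θ in (0:ℝ)..(2*Real.pi),
          (2*Real.pi*Real.log a
            + 2*Real.pi * Real.log (‖1 - ((a:ℂ))^2 * Complex.exp ((θ:ℂ) * I)^2‖)) := by
    apply intervalIntegral.integral_congr_ae
    filter_upwards [hae] with θ hθ _
    have hgood : Complex.exp ((θ:ℂ) * I)^2 ≠ 1 := hθ
    have hx : ‖(a:ℂ) * Complex.exp ((θ:ℂ) * I)‖ = a := by
      rw [norm_mul, Complex.norm_exp]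
      simp [abs_of_pos ha0]
    have hx2 : ((a:ℂ) * Complex.exp ((θ:ℂ) * I))^2 ≠ ((a:ℂ))^2 := by
      intro h
      apply hgood
      have h2 : ((a:ℂ))^2 * Complex.exp ((θ:ℂ) * I)^2 = ((a:ℂ))^2 * 1 := by
        rw [mul_one]; linear_combination h
      exact mul_left_cancel₀ (pow_ne_zero 2 ha0') h2
    rw [inner_integral ha0 ha1 hx hx2]
    have hfac : (a:ℂ) * Complex.exp ((θ:ℂ) * I) - ((a:ℂ) * Complex.exp ((θ:ℂ) * I))^3
        = ((a:ℂ) * Complex.exp ((θ:ℂ) * I)) * (1 - ((a:ℂ))^2 * Complex.exp ((θ:ℂ) * I)^2) := by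
      ring
    have habs2 : ‖((a:ℂ))^2 * Complex.exp ((θ:ℂ) * I)^2‖ = a^2 := by
      rw [norm_mul, norm_pow, norm_pow, Complex.norm_exp, Complex.norm_real, Real.norm_eq_abs, abs_of_pos ha0]
      simp
    have hne2 : ‖1 - ((a:ℂ))^2 * Complex.exp ((θ:ℂ) * I)^2‖ ≠ 0 :=
      one_sub_sq_ne ha0 ha' θ
    rw [hfac, norm_mul, Real.log_mul (by rw [hx]; exact ne_of_gt ha0) hne2, hx]
    ring
  rw [mahlerMeasure, hcong]
  have intc : IntervalIntegrable (fun _ : ℝ => 2*Real.pi*Real.log a)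
      MeasureTheory.volume 0 (2*Real.pi) := intervalIntegrable_const
  have hcont2 : Continuous (fun θ : ℝ =>
      2*Real.pi * Real.log (‖1 - ((a:ℂ))^2 * Complex.exp ((θ:ℂ) * I)^2‖)) := by
    apply Continuous.mul continuous_const
    apply Continuous.log
    · apply continuous_norm.comp
      exact continuous_const.sub (continuous_const.mul
        ((Complex.continuous_exp.comp (Complex.continuous_ofReal.mul continuous_const)).pow 2))
    · exact fun θ => one_sub_sq_ne ha0 ha' θ
  have houter : (∫ θ in (0:ℝ)..(2*Real.pi),
      2*Real.pi * Real.log (‖1 - ((a:ℂ))^2 * Complex.exp ((θ:ℂ) * I)^2‖)) = 0 := by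
    rw [intervalIntegral.integral_const_mul]
    have h := meanvalue_log_abs (fun z => 1 - ((a:ℂ))^2 * z^2)
      (by fun_prop)
      (fun z hz => by
        have hz1 : ‖z‖ ≤ 1 := by simpa [Complex.dist_eq] using hz
        have h1 : ‖((a:ℂ))^2 * z^2‖ < 1 := by
          rw [norm_mul, norm_pow, norm_pow, Complex.norm_real, Real.norm_eq_abs, abs_of_pos ha0]
          have hza : ‖z‖^2 ≤ 1 := by nlinarith [norm_nonneg z]
          nlinarith [mul_nonneg (sq_nonneg a) (by linarith : (0:ℝ) ≤ 1 - ‖z‖^2)]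
        have h2 : (((a:ℂ))^2 * z^2).re ≤ ‖((a:ℂ))^2 * z^2‖ := Complex.re_le_norm _
        simp only [sub_re, one_re]
        linarith)
    rw [h]
    simp
  rw [intervalIntegral.integral_add intc (hcont2.intervalIntegrable _ _), houter,
    intervalIntegral.integral_const]
  simp only [add_zero, smul_eq_mul, sub_zero]
  field_simp
end

section
/- For every real number a, the classical Mahler measure of P_a(x,y) = y² + 2xy − a·x³ + a⁻¹·x satisfies: m(P_a) = log a whenever a ≥ (3 + √13)/2, and m(P_a) = log(a⁻¹) whenever 0 < a ≤ (−3 + √13)/2. -/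
open Complex Real MeasureTheory intervalIntegral Metric

/-- `P_a(x,y) = y² + 2xy − a·x³ + a⁻¹·x` for a real parameter `a`. -/
noncomputable def Pa (a : ℝ) : ℂ → ℂ → ℂ :=
  fun x y => y ^ 2 + 2 * x * y - (a : ℂ) * x ^ 3 + (a : ℂ)⁻¹ * x

noncomputable def Complex.abs : AbsoluteValue ℂ ℝ :=
  IsAbsoluteValue.toAbsoluteValue (norm : ℂ → ℝ)

@[simp] lemma Complex.abs_apply (z : ℂ) : Complex.abs z = ‖z‖ := rfl

lemma Complex.re_le_abs (z : ℂ) : z.re ≤ Complex.abs z := Complex.re_le_norm z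

lemma Complex.abs_exp_ofReal_mul_I (x : ℝ) : Complex.abs (Complex.exp (x * Complex.I)) = 1 :=
  Complex.norm_exp_ofReal_mul_I x

lemma Complex.continuous_abs : Continuous Complex.abs := continuous_norm

lemma Complex.abs_ofReal (r : ℝ) : Complex.abs (r : ℂ) = |r| := Complex.norm_real r

lemma Complex.abs_conj (z : ℂ) : Complex.abs ((starRingEnd ℂ) z) = Complex.abs z :=
  Complex.norm_conj z

lemma Complex.normSq_eq_abs (z : ℂ) : Complex.normSq z = Complex.abs z ^ 2 :=
  Complex.normSq_eq_norm_sq z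

lemma Complex.sq_abs (z : ℂ) : Complex.abs z ^ 2 = Complex.normSq z := Complex.sq_norm z

lemma lemB (w : ℂ) (hw : Complex.abs w < 1) :
    ∫ θ in (0:ℝ)..(2*Real.pi), Real.log (Complex.abs (1 - w * Complex.exp (θ * Complex.I))) = 0 := by
  have hne : ∀ z : ℂ, z ∈ closedBall (0:ℂ) 1 → (1 - w * z) ∈ Complex.slitPlane := by
    intro z hz
    rw [mem_closedBall, dist_zero_right] at hz
    left
    have h1 : Complex.abs (w * z) < 1 := by
      rw [map_mul]
      calc Complex.abs w * Complex.abs z ≤ Complex.abs w * 1 :=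
        mul_le_mul_of_nonneg_left hz (Complex.abs.nonneg w)
      _ < 1 := by simpa using hw
    have h2 : (w*z).re ≤ Complex.abs (w*z) := Complex.re_le_abs _
    have : (1 - w*z).re = 1 - (w*z).re := by simp
    rw [this]; linarith
  set f : ℂ → ℂ := fun z => Complex.log (1 - w * z) with hf
  have hcont : ∀ z : ℂ, z ∈ closedBall (0:ℂ) 1 → ContinuousAt f z := by
    intro z hz
    exact ContinuousAt.clog (by fun_prop) (hne z hz)
  have hdiff : DiffContOnCl ℂ f (ball (0:ℂ) 1) := by
    constructor
    · intro z hz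
      apply DifferentiableAt.differentiableWithinAt
      apply DifferentiableAt.clog (by fun_prop)
      exact hne z (ball_subset_closedBall hz)
    · rw [closure_ball (0:ℂ) one_ne_zero]
      exact fun z hz => (hcont z hz).continuousWithinAt
  have h0 : (0:ℂ) ∈ ball (0:ℂ) 1 := by simp
  have hcauchy := hdiff.circleIntegral_sub_inv_smul h0
  have hf0 : f 0 = 0 := by simp [hf]
  rw [hf0, smul_zero] at hcauchy
  rw [circleIntegral] at hcauchy
  simp only [deriv_circleMap, circleMap, ofReal_one, one_mul, zero_add, sub_zero, smul_eq_mul] at hcauchy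
  have hexp : ∀ θ : ℝ, Complex.exp (θ * I) * I * ((Complex.exp (θ * I))⁻¹ * f (Complex.exp (θ * I)))
      = I * f (Complex.exp (θ * I)) := by
    intro θ
    have : Complex.exp (θ * I) ≠ 0 := Complex.exp_ne_zero _
    field_simp
  rw [intervalIntegral.integral_congr (fun θ _ => hexp θ)] at hcauchy
  rw [intervalIntegral.integral_const_mul] at hcauchy
  have hint : ∫ θ in (0:ℝ)..(2*Real.pi), f (Complex.exp (θ * I)) = 0 := by
    rcases mul_eq_zero.mp hcauchy with h | h
    · exact absurd h Complex.I_ne_zero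
    · exact h
  have hcg : Continuous fun θ : ℝ => f (Complex.exp (θ * I)) := by
    apply continuous_iff_continuousAt.mpr
    intro θ
    exact (hcont _ (by simp [Complex.abs_exp_ofReal_mul_I θ])).comp (by fun_prop)
  have hre : ∀ θ : ℝ, Real.log (Complex.abs (1 - w * Complex.exp (θ * Complex.I)))
      = (f (Complex.exp (θ * I))).re := by
    intro θ; rw [hf]; exact (Complex.log_re _).symm
  rw [intervalIntegral.integral_congr (fun θ _ => hre θ)]
  have h2pi : (0:ℝ) ≤ 2*Real.pi := by positivity
  rw [intervalIntegral.integral_of_le h2pi] at hint ⊢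
  have hI : MeasureTheory.Integrable (fun θ : ℝ => f (Complex.exp (θ * I)))
      (volume.restrict (Set.Ioc 0 (2*Real.pi))) :=
    (hcg.integrableOn_Ioc).integrable
  calc ∫ θ in Set.Ioc (0:ℝ) (2*Real.pi), (f (Complex.exp (θ * I))).re
      = (∫ θ in Set.Ioc (0:ℝ) (2*Real.pi), f (Complex.exp (θ * I))).re := by
        simpa using integral_re hI
    _ = 0 := by rw [hint]; rfl

lemma lemBc (w : ℂ) (hw : Complex.abs w < 1) :
    Continuous (fun θ : ℝ => Real.log (Complex.abs (1 - w * Complex.exp (θ * Complex.I)))) := by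
  apply Continuous.log
  · exact Complex.continuous_abs.comp (by fun_prop)
  · intro θ
    have h1 : Complex.abs (w * Complex.exp (θ * Complex.I)) < 1 := by
      rw [map_mul, Complex.abs_exp_ofReal_mul_I, mul_one]; exact hw
    intro h0
    rw [map_eq_zero, sub_eq_zero] at h0
    rw [← h0] at h1
    simp at h1

lemma lemD (x c : ℂ) (hx : Complex.abs x = 1) (hc : 3 < Complex.abs c) :
    ∫ φ in (0:ℝ)..(2*Real.pi),
      Real.log (Complex.abs ((Complex.exp (φ * Complex.I))^2 + 2*x*Complex.exp (φ * Complex.I) + c))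
      = 2 * Real.pi * Real.log (Complex.abs c) := by
  obtain ⟨d, hd⟩ := IsAlgClosed.exists_pow_nat_eq (x^2 - c) (n := 2) (by norm_num)
  set α : ℂ := -x + d with hαdef
  set β : ℂ := -x - d with hβdef
  have hαβ : α * β = c := by rw [hαdef, hβdef]; linear_combination -hd
  have hsum : Complex.abs (α + β) = 2 := by
    have : α + β = -(2*x) := by rw [hαdef, hβdef]; ring
    rw [this, map_neg_eq_map, map_mul, hx, mul_one]
    simp
  have key : ∀ u v : ℂ, Complex.abs (u+v) = 2 → u * v = c → 1 < Complex.abs u := by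
    intro u v hs hp
    by_contra h
    push_neg at h
    have hv : Complex.abs v ≤ 3 := by
      calc Complex.abs v = Complex.abs ((u+v) - u) := by ring_nf
      _ ≤ Complex.abs (u+v) + Complex.abs u := by
          simpa using Complex.abs.sub_le_add (u+v) u
      _ ≤ 3 := by rw [hs]; linarith
    have : Complex.abs c ≤ 3 := by
      rw [← hp, map_mul]
      nlinarith [Complex.abs.nonneg u, Complex.abs.nonneg v]
    linarith
  have hα : 1 < Complex.abs α := key α β hsum hαβ
  have hβ : 1 < Complex.abs β := key β α (by rwa [add_comm]) (by rwa [mul_comm])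
  have hα0 : α ≠ 0 := by intro h; rw [h] at hα; simp at hα; linarith
  have hβ0 : β ≠ 0 := by intro h; rw [h] at hβ; simp at hβ; linarith
  have hc0 : Complex.abs c ≠ 0 := by positivity
  have hwα : Complex.abs α⁻¹ < 1 := by rw [map_inv₀]; exact inv_lt_one_of_one_lt₀ hα
  have hwβ : Complex.abs β⁻¹ < 1 := by rw [map_inv₀]; exact inv_lt_one_of_one_lt₀ hβ
  have hne : ∀ (w : ℂ), Complex.abs w < 1 → ∀ φ : ℝ,
      Complex.abs (1 - w * Complex.exp (φ * Complex.I)) ≠ 0 := by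
    intro w hw φ h0
    rw [map_eq_zero, sub_eq_zero] at h0
    have : Complex.abs (w * Complex.exp (φ * Complex.I)) < 1 := by
      rw [map_mul, Complex.abs_exp_ofReal_mul_I, mul_one]; exact hw
    rw [← h0] at this; simp at this
  have hpt : ∀ φ : ℝ,
      Real.log (Complex.abs ((Complex.exp (φ * Complex.I))^2 + 2*x*Complex.exp (φ * Complex.I) + c))
      = Real.log (Complex.abs c)
        + Real.log (Complex.abs (1 - α⁻¹ * Complex.exp (φ * Complex.I)))
        + Real.log (Complex.abs (1 - β⁻¹ * Complex.exp (φ * Complex.I))) := by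
    intro φ
    set y := Complex.exp (φ * Complex.I) with hy
    have h1 : c * (1 - α⁻¹*y) * (1 - β⁻¹*y) = (c * α⁻¹ * β⁻¹) * ((α - y) * (β - y)) := by
      field_simp
    have hcab : c * α⁻¹ * β⁻¹ = 1 := by rw [← hαβ]; field_simp
    have h2 : (α - y) * (β - y) = y^2 + 2*x*y + c := by
      rw [hαdef, hβdef]; linear_combination -hd
    have hfact : y^2 + 2*x*y + c = c * (1 - α⁻¹*y) * (1 - β⁻¹*y) := by
      rw [h1, hcab, one_mul, h2]
    rw [hfact, map_mul, map_mul, Real.log_mul (mul_ne_zero hc0 (hne _ hwα φ)) (hne _ hwβ φ),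
      Real.log_mul hc0 (hne _ hwα φ)]
  rw [intervalIntegral.integral_congr (fun φ _ => hpt φ)]
  rw [intervalIntegral.integral_add, intervalIntegral.integral_add]
  · rw [lemB _ hwα, lemB _ hwβ, intervalIntegral.integral_const]
    simp only [add_zero, smul_eq_mul, sub_zero]
  · exact intervalIntegrable_const
  · exact (lemBc _ hwα).intervalIntegrable _ _
  · exact (intervalIntegrable_const.add ((lemBc _ hwα).intervalIntegrable _ _))
  · exact (lemBc _ hwβ).intervalIntegrable _ _

lemma lemF (a : ℝ) (ha : 0 < a) (h11 : 11 ≤ a^2 + (a⁻¹)^2) :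
    mahlerMeasure (Pa a) 1 1 = Real.log (max a a⁻¹) := by
  have ha' : (a:ℂ) ≠ 0 := by exact_mod_cast ha.ne'
  have hainv : 0 < a⁻¹ := inv_pos.mpr ha
  have hane : a ≠ 1 := by rintro rfl; norm_num at h11
  set M := max a a⁻¹ with hMdef
  set m := min a a⁻¹ with hmdef
  have hm0 : 0 < m := lt_min ha hainv
  have hM0 : 0 < M := lt_of_lt_of_le ha (le_max_left _ _)
  have hm1 : m < 1 := by
    rcases lt_or_gt_of_ne hane with h | h
    · exact lt_of_le_of_lt (min_le_left _ _) h
    · exact lt_of_le_of_lt (min_le_right _ _) (inv_lt_one_of_one_lt₀ h)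
  have hmabs : Complex.abs ((m:ℝ):ℂ) < 1 := by
    rw [Complex.abs_ofReal, abs_of_pos hm0]; exact hm1
  have hmabs' : Complex.abs (-((m:ℝ):ℂ)) < 1 := by rwa [map_neg_eq_map]
  have hfne : ∀ (w : ℂ), Complex.abs w < 1 → ∀ φ : ℝ,
      Complex.abs (1 - w * Complex.exp (φ * Complex.I)) ≠ 0 := by
    intro w hw φ h0
    rw [map_eq_zero, sub_eq_zero] at h0
    have : Complex.abs (w * Complex.exp (φ * Complex.I)) < 1 := by
      rw [map_mul, Complex.abs_exp_ofReal_mul_I, mul_one]; exact hw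
    rw [← h0] at this; simp at this
  -- pointwise outer identity
  have hout : ∀ θ : ℝ,
      Real.log (Complex.abs ((a:ℂ)⁻¹ - (a:ℂ) * (Complex.exp (θ*Complex.I))^2))
      = Real.log M + Real.log (Complex.abs (1 - ((m:ℝ):ℂ) * Complex.exp (θ*Complex.I)))
        + Real.log (Complex.abs (1 - (-((m:ℝ):ℂ)) * Complex.exp (θ*Complex.I))) := by
    intro θ
    set x := Complex.exp (θ*Complex.I) with hxdef
    have hx1 : Complex.abs x = 1 := Complex.abs_exp_ofReal_mul_I θ
    have hx0 : x ≠ 0 := by intro h; rw [h] at hx1; simp at hx1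
    have key : Complex.abs ((a:ℂ)⁻¹ - (a:ℂ)*x^2)
        = M * (Complex.abs (1 - ((m:ℝ):ℂ)*x) * Complex.abs (1 - (-((m:ℝ):ℂ))*x)) := by
      rcases lt_or_gt_of_ne hane with hlt | hgt
      · have hMa : M = a⁻¹ := max_eq_right (by nlinarith)
        have hma : m = a := min_eq_left (by nlinarith)
        have hfac : (a:ℂ)⁻¹ - (a:ℂ)*x^2
            = (((a⁻¹:ℝ)):ℂ) * ((1 - ((m:ℝ):ℂ)*x) * (1 - (-((m:ℝ):ℂ))*x)) := by
          rw [hma]; push_cast; field_simp; ring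
        rw [hfac, map_mul, map_mul, Complex.abs_ofReal, abs_of_pos hainv, hMa]
      · have hia : a⁻¹ < a := lt_trans (inv_lt_one_of_one_lt₀ hgt) hgt
        have hMa : M = a := max_eq_left (le_of_lt hia)
        have hma : m = a⁻¹ := min_eq_right (le_of_lt hia)
        have hcx : (starRingEnd ℂ) x = x⁻¹ := by
          have h1 : x * (starRingEnd ℂ) x = 1 := by
            rw [Complex.mul_conj, Complex.normSq_eq_abs, hx1]; norm_num
          exact eq_inv_of_mul_eq_one_right h1
        have hconj : Complex.abs ((a:ℂ)⁻¹ - (a:ℂ)*x^2)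
            = Complex.abs ((a:ℂ) - (a:ℂ)⁻¹*x^2) := by
          calc Complex.abs ((a:ℂ)⁻¹ - (a:ℂ)*x^2)
              = Complex.abs ((starRingEnd ℂ) ((a:ℂ)⁻¹ - (a:ℂ)*x^2)) := (Complex.abs_conj _).symm
            _ = Complex.abs ((a:ℂ)⁻¹ - (a:ℂ) * (x⁻¹)^2) := by
                rw [map_sub, map_inv₀, map_mul, map_pow, Complex.conj_ofReal, hcx]
            _ = Complex.abs ((x⁻¹)^2) * Complex.abs ((a:ℂ)⁻¹*x^2 - (a:ℂ)) := by
                rw [← map_mul]; congr 1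
                have hxx : (x⁻¹)^2 * x^2 = 1 := by
                  rw [← mul_pow, inv_mul_cancel₀ hx0]; norm_num
                linear_combination (-(a:ℂ)⁻¹) * hxx
            _ = Complex.abs ((a:ℂ) - (a:ℂ)⁻¹*x^2) := by
                rw [map_pow, map_inv₀, hx1]; norm_num
                rw [← norm_neg]; congr 1; ring
        have hfac : (a:ℂ) - (a:ℂ)⁻¹*x^2
            = ((a:ℝ):ℂ) * ((1 - ((m:ℝ):ℂ)*x) * (1 - (-((m:ℝ):ℂ))*x)) := by
          rw [hma]; push_cast; field_simp; ring
        rw [hconj, hfac, map_mul, map_mul, Complex.abs_ofReal, abs_of_pos ha, hMa]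
    rw [key, Real.log_mul (ne_of_gt hM0) (mul_ne_zero (hfne _ hmabs θ) (hfne _ hmabs' θ)),
      Real.log_mul (hfne _ hmabs θ) (hfne _ hmabs' θ), ← add_assoc]
  -- a.e. inner equality
  have hS : ∀ᵐ θ : ℝ ∂volume, Real.cos (2*θ) ≠ 1 := by
    have hsub : {θ : ℝ | Real.cos (2*θ) = 1} ⊆ Set.range (fun n : ℤ => (n:ℝ) * Real.pi) := by
      intro θ hθ
      obtain ⟨n, hn⟩ := (Real.cos_eq_one_iff _).mp hθ
      exact ⟨n, show (n:ℝ) * Real.pi = θ by linarith⟩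
    have h0 : volume {θ : ℝ | Real.cos (2*θ) = 1} = 0 :=
      measure_mono_null hsub ((Set.countable_range _).measure_zero _)
    have := (MeasureTheory.measure_eq_zero_iff_ae_notMem (μ := volume)).mp h0
    filter_upwards [this] with θ hθ
    simpa using hθ
  have hae : ∀ᵐ θ : ℝ ∂volume,
      (∫ φ in (0:ℝ)..(2*Real.pi),
        Real.log (Complex.abs (Pa a (Complex.exp (θ*Complex.I)) (Complex.exp (φ*Complex.I)))))
      = 2*Real.pi * Real.log (Complex.abs ((a:ℂ)⁻¹ - (a:ℂ) * (Complex.exp (θ*Complex.I))^2)) := by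
    filter_upwards [hS] with θ hθ
    set x := Complex.exp (θ*Complex.I) with hxdef
    have hx1 : Complex.abs x = 1 := Complex.abs_exp_ofReal_mul_I θ
    set c : ℂ := (a:ℂ)⁻¹ * x - (a:ℂ) * x^3 with hcdef
    have habsc : Complex.abs c = Complex.abs ((a:ℂ)⁻¹ - (a:ℂ)*x^2) := by
      have : c = x * ((a:ℂ)⁻¹ - (a:ℂ)*x^2) := by rw [hcdef]; ring
      rw [this, map_mul, hx1, one_mul]
    have hsq : x^2 = Complex.exp ((2*θ : ℝ) * Complex.I) := by
      rw [hxdef, ← Complex.exp_nat_mul]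
      congr 1
      push_cast
      ring
    have habs2 : (Complex.abs ((a:ℂ)⁻¹ - (a:ℂ)*x^2))^2
        = (a⁻¹)^2 + a^2 - 2*a⁻¹*a*Real.cos (2*θ) := by
      rw [hsq, ← Complex.ofReal_inv, Complex.sq_abs, Complex.normSq_apply]
      simp only [Complex.sub_re, Complex.sub_im, Complex.ofReal_re, Complex.ofReal_im,
        Complex.mul_re, Complex.mul_im, Complex.exp_ofReal_mul_I_re, Complex.exp_ofReal_mul_I_im]
      have := Real.sin_sq_add_cos_sq (2*θ)
      nlinarith [this]
    have hcos : Real.cos (2*θ) < 1 := lt_of_le_of_ne (Real.cos_le_one _) hθ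
    have hainva : a⁻¹ * a = 1 := inv_mul_cancel₀ ha.ne'
    have h3 : 3 < Complex.abs ((a:ℂ)⁻¹ - (a:ℂ)*x^2) := by
      nlinarith [Complex.abs.nonneg ((a:ℂ)⁻¹ - (a:ℂ)*x^2)]
    have hpt : ∀ φ : ℝ, Pa a x (Complex.exp (φ*Complex.I))
        = (Complex.exp (φ*Complex.I))^2 + 2*x*Complex.exp (φ*Complex.I) + c := by
      intro φ; simp only [Pa, hcdef]; ring
    rw [intervalIntegral.integral_congr (fun φ _ => by rw [hpt φ])]
    rw [lemD x c hx1 (by rwa [habsc])]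
    rw [habsc]
  -- assemble
  rw [mahlerMeasure]
  simp only [Complex.ofReal_one, one_mul]
  simp only [← Complex.abs_apply]
  rw [intervalIntegral.integral_congr_ae (hae.mono fun θ h _ => h)]
  rw [intervalIntegral.integral_const_mul]
  rw [intervalIntegral.integral_congr (fun θ _ => hout θ)]
  rw [intervalIntegral.integral_add (intervalIntegrable_const.add
      ((lemBc _ hmabs).intervalIntegrable _ _)) ((lemBc _ hmabs').intervalIntegrable _ _),
    intervalIntegral.integral_add intervalIntegrable_const
      ((lemBc _ hmabs).intervalIntegrable _ _),
    lemB _ hmabs, lemB _ hmabs', intervalIntegral.integral_const]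
  simp only [add_zero, smul_eq_mul, sub_zero]
  have hπ : Real.pi ≠ 0 := Real.pi_ne_zero
  field_simp

theorem stmt_6 (a : ℝ) :
    ((3 + Real.sqrt 13) / 2 ≤ a → mahlerMeasure (Pa a) 1 1 = Real.log a) ∧
    (0 < a → a ≤ (-3 + Real.sqrt 13) / 2 → mahlerMeasure (Pa a) 1 1 = Real.log a⁻¹) := by
  have hs : Real.sqrt 13 ^ 2 = 13 := Real.sq_sqrt (by norm_num)
  have hs0 : 0 ≤ Real.sqrt 13 := Real.sqrt_nonneg _
  have hs3 : 3 < Real.sqrt 13 := by nlinarith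
  have hs5 : Real.sqrt 13 < 5 := by nlinarith
  constructor
  · intro h
    have ha1 : 1 < a := by linarith
    have ha : 0 < a := by linarith
    have hinv : a * a⁻¹ = 1 := mul_inv_cancel₀ ha.ne'
    have h2 : 0 ≤ a^2 - 3*a - 1 := by nlinarith
    have h3 : 3 ≤ a - a⁻¹ := by nlinarith [hinv]
    have h9 : 9 ≤ (a - a⁻¹)^2 := by nlinarith
    have h11 : 11 ≤ a^2 + (a⁻¹)^2 := by nlinarith [hinv]
    rw [lemF a ha h11, max_eq_left (by linarith : a⁻¹ ≤ a)]
  · intro ha hle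
    have ha1 : a < 1 := by nlinarith
    have hinv : a * a⁻¹ = 1 := mul_inv_cancel₀ ha.ne'
    have h2 : a^2 + 3*a - 1 ≤ 0 := by nlinarith
    have h3 : 3 ≤ a⁻¹ - a := by nlinarith [hinv]
    have h9 : 9 ≤ (a⁻¹ - a)^2 := by nlinarith
    have h11 : 11 ≤ a^2 + (a⁻¹)^2 := by nlinarith [hinv]
    rw [lemF a ha h11, max_eq_right (by linarith : a ≤ a⁻¹)]
end
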